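/- Let x_1,…,x_K ∈ ℝ^d be pairwise distinct points and let μ be a probability measure on ℝ^d that is absolutely continuous with respect to Lebesgue measure and has finite second moment. Define G : ℝ^K → ℝ by G(φ) = ∫ min_{1≤k≤K} (‖x_k − y‖² − φ_k) dμ(y). Then for every φ ∈ ℝ^K and every index k, the partial derivative of G with respect to φ_k exists at φ and equals −μ(L_k(φ)), where L_k(φ) is the k-th Laguerre cell of (x, φ). -/

import Mathlib

open MeasureTheory
open scoped ENNReal BigOperators RealInnerProductSpace Topology

noncomputable section

/-- `ℝ^d` as a Euclidean space. -/
abbrev Rd (d : ℕ) := EuclideanSpace ℝ (Fin d)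

/-- Squared 2-Wasserstein distance: infimum over all couplings `π` (probability measures on the
product whose first marginal is `μ` and second marginal is `ν`) of the quadratic cost. -/
def W2sq {d : ℕ} (μ ν : Measure (Rd d)) : ℝ≥0∞ :=
  ⨅ (π : Measure (Rd d × Rd d)) (_ : IsProbabilityMeasure π)
    (_ : π.map Prod.fst = μ) (_ : π.map Prod.snd = ν),
    ∫⁻ p, ENNReal.ofReal (‖p.1 - p.2‖ ^ 2) ∂π

/-- The discrete measure `∑ k, a k • δ_{x k}`. -/
def discreteMeasure {d K : ℕ} (a : Fin K → ℝ≥0∞) (x : Fin K → Rd d) : Measure (Rd d) :=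
  ∑ k, a k • Measure.dirac (x k)

/-- The tie-broken Voronoi cell of the center `x k`. -/
def voronoi {d K : ℕ} (x : Fin K → Rd d) (k : Fin K) : Set (Rd d) :=
  {z | (∀ j, ‖z - x k‖ ≤ ‖z - x j‖) ∧ ∀ j, j < k → ‖z - x k‖ < ‖z - x j‖}

/-- A measure has a finite second moment. -/
def FiniteSecondMoment {d : ℕ} (μ : Measure (Rd d)) : Prop :=
  ∫⁻ y, ENNReal.ofReal (‖y‖ ^ 2) ∂μ < ⊤
/-- The Laguerre cell of the center `x k` with potential `φ`. -/
def laguerre {d K : ℕ} (x : Fin K → Rd d) (φ : Fin K → ℝ) (k : Fin K) : Set (Rd d) :=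
  {z | ∀ j, ‖z - x k‖ ^ 2 - φ k ≤ ‖z - x j‖ ^ 2 - φ j}


lemma ciInf_attained {ι : Type*} [Nonempty ι] [Finite ι] (f : ι → ℝ) :
    ∃ j, (⨅ i, f i) = f j ∧ ∀ i, f j ≤ f i := by
  obtain ⟨j, hj⟩ := Finite.exists_min f
  exact ⟨j, le_antisymm (ciInf_le (Set.finite_range f).bddBelow j) (le_ciInf hj), hj⟩

lemma volume_hyperplane {d : ℕ} (v : Rd d) (hv : v ≠ 0) (c : ℝ) :
    volume {y : Rd d | ⟪v, y⟫ = c} = 0 := by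
  set Kr : Submodule ℝ (Rd d) := LinearMap.ker ((innerSL ℝ v : Rd d →L[ℝ] ℝ) : Rd d →ₗ[ℝ] ℝ) with hKr
  have hvker : v ∉ Kr := by
    simp only [hKr, LinearMap.mem_ker, ContinuousLinearMap.coe_coe, innerSL_apply_apply]
    rw [real_inner_self_eq_norm_sq]
    exact pow_ne_zero 2 (norm_ne_zero_iff.2 hv)
  have hKtop : Kr ≠ ⊤ := fun h => hvker (h ▸ Submodule.mem_top)
  have hnv : ‖v‖ ^ 2 ≠ 0 := pow_ne_zero 2 (norm_ne_zero_iff.2 hv)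
  set y₀ : Rd d := (c / ‖v‖ ^ 2) • v with hy₀
  have hy₀c : ⟪v, y₀⟫ = c := by
    rw [hy₀, real_inner_smul_right, real_inner_self_eq_norm_sq]
    field_simp
  have hset : {y : Rd d | ⟪v, y⟫ = c} = (fun y => y + (-y₀)) ⁻¹' (Kr : Set (Rd d)) := by
    ext y
    simp only [Set.mem_setOf_eq, Set.mem_preimage, SetLike.mem_coe, hKr, LinearMap.mem_ker,
      ContinuousLinearMap.coe_coe, innerSL_apply_apply, inner_add_right, inner_neg_right, hy₀c]
    constructor <;> intro h <;> linarith
  rw [hset, measure_preimage_add_right]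
  exact Measure.addHaar_submodule volume Kr hKtop


/-- The partial derivative of `G(φ) = ∫ min_k (‖x k − y‖² − φ k) dμ(y)` with respect to `φ k`
exists and equals `−μ(L_k(φ))`, the negative mass of the `k`-th Laguerre cell. -/
theorem stmt12 {d : ℕ} (K : ℕ) (hK : 1 ≤ K)
    (x : Fin K → Rd d) (hx : Function.Injective x)
    (μ : Measure (Rd d)) (hprob : IsProbabilityMeasure μ) (hac : μ ≪ volume)
    (hmom : FiniteSecondMoment μ) (φ : Fin K → ℝ) (k : Fin K) :
    HasDerivAt
      (fun t : ℝ => ∫ y, (⨅ j, (‖x j - y‖ ^ 2 - Function.update φ k t j)) ∂μ)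
      (-(μ (laguerre x φ k)).toReal) (φ k) := by
  classical
  haveI : Nonempty (Fin K) := ⟨⟨0, hK⟩⟩
  set t₀ := φ k with ht₀
  set F : ℝ → Rd d → ℝ := fun t y => ⨅ j, (‖x j - y‖ ^ 2 - Function.update φ k t j) with hFdef
  set L : Set (Rd d) := laguerre x φ k with hLdef
  set F' : Rd d → ℝ := Set.indicator L (fun _ => (-1 : ℝ)) with hF'def
  -- laguerre cell is closed hence measurable
  have hLclosed : IsClosed L := by
    have : L = ⋂ j, {z : Rd d | ‖z - x k‖ ^ 2 - φ k ≤ ‖z - x j‖ ^ 2 - φ j} := by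
      ext z; simp [hLdef, laguerre]
    rw [this]
    exact isClosed_iInter fun j =>
      isClosed_le (((continuous_id.sub continuous_const).norm.pow 2).sub continuous_const)
        (((continuous_id.sub continuous_const).norm.pow 2).sub continuous_const)
  have hLmeas : MeasurableSet L := hLclosed.measurableSet
  -- continuity of F t in y
  have hFc : ∀ t, Continuous (F t) := by
    intro t
    have h1 : ∀ j : Fin K, Continuous fun y : Rd d => ‖x j - y‖ ^ 2 - Function.update φ k t j :=
      fun j => ((continuous_const.sub continuous_id).norm.pow 2).sub continuous_const
    have h2 : Continuous fun y : Rd d => Finset.univ.inf' Finset.univ_nonempty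
        (fun j => ‖x j - y‖ ^ 2 - Function.update φ k t j) :=
      Continuous.finset_inf'_apply _ (fun j _ => h1 j)
    have h3 : F t = fun y : Rd d => Finset.univ.inf' Finset.univ_nonempty
        (fun j => ‖x j - y‖ ^ 2 - Function.update φ k t j) := by
      funext y
      exact (Finset.inf'_univ_eq_ciInf _).symm
    rw [h3]; exact h2
  -- integrability of ‖·‖²
  have hnormsq : Integrable (fun y : Rd d => ‖y‖ ^ 2) μ := by
    refine ⟨(continuous_norm.pow 2).aestronglyMeasurable, ?_⟩
    rw [hasFiniteIntegral_iff_ofReal (Filter.Eventually.of_forall fun y => by positivity)]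
    exact hmom
  have hterm_int : ∀ (a : Rd d) (c : ℝ), Integrable (fun y : Rd d => ‖a - y‖ ^ 2 - c) μ := by
    intro a c
    have hbound : Integrable (fun y : Rd d => 2 * ‖a‖ ^ 2 + 2 * ‖y‖ ^ 2 + |c|) μ :=
      ((integrable_const _).add (hnormsq.const_mul 2)).add (integrable_const _)
    refine hbound.mono ?_ (Filter.Eventually.of_forall fun y => ?_)
    · exact ((((continuous_const.sub continuous_id).norm.pow 2).sub
        continuous_const)).aestronglyMeasurable
    · have h1 : ‖a - y‖ ≤ ‖a‖ + ‖y‖ := norm_sub_le a y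
      have h2 : (0:ℝ) ≤ ‖a - y‖ := norm_nonneg _
      have h3 : (0:ℝ) ≤ ‖a‖ := norm_nonneg _
      have h4 : (0:ℝ) ≤ ‖y‖ := norm_nonneg _
      have h5 : (0:ℝ) ≤ |c| := abs_nonneg c
      have h6 : ‖a - y‖ ^ 2 ≤ 2 * ‖a‖ ^ 2 + 2 * ‖y‖ ^ 2 := by
        nlinarith [sq_nonneg (‖a‖ - ‖y‖), mul_self_le_mul_self h2 h1]
      have habs : |c| ≥ c ∧ |c| ≥ -c := ⟨le_abs_self c, neg_le_abs c⟩
      rw [Real.norm_eq_abs, Real.norm_eq_abs]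
      rw [abs_of_nonneg (by nlinarith : (0:ℝ) ≤ 2 * ‖a‖ ^ 2 + 2 * ‖y‖ ^ 2 + |c|)]
      rw [abs_sub_le_iff]
      constructor <;> nlinarith
  -- integrability of F t₀
  have hFt₀ : F t₀ = fun y => ⨅ j, (‖x j - y‖ ^ 2 - φ j) := by
    funext y
    simp [hFdef, ht₀, Function.update_eq_self]
  have hF_int : Integrable (F t₀) μ := by
    have hbound : Integrable (fun y : Rd d => ∑ j, |‖x j - y‖ ^ 2 - φ j|) μ :=
      integrable_finset_sum _ fun j _ => (hterm_int (x j) (φ j)).abs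
    refine hbound.mono (hFc t₀).aestronglyMeasurable (Filter.Eventually.of_forall fun y => ?_)
    obtain ⟨j, hj, -⟩ := ciInf_attained (fun j => ‖x j - y‖ ^ 2 - Function.update φ k t₀ j)
    rw [Real.norm_eq_abs, Real.norm_eq_abs]
    refine le_trans ?_ (le_abs_self _)
    calc |F t₀ y| = |‖x j - y‖ ^ 2 - Function.update φ k t₀ j| := by
          show |⨅ i, ‖x i - y‖ ^ 2 - Function.update φ k t₀ i| = _
          rw [hj]
      _ = |‖x j - y‖ ^ 2 - φ j| := by rw [ht₀, Function.update_eq_self]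
      _ ≤ ∑ i, |‖x i - y‖ ^ 2 - φ i| :=
          Finset.single_le_sum (f := fun i => |‖x i - y‖ ^ 2 - φ i|)
            (fun i _ => abs_nonneg _) (Finset.mem_univ j)
  -- Lipschitz in t
  have hkey : ∀ (y : Rd d) (s t : ℝ), F s y ≤ F t y + |s - t| := by
    intro y s t
    obtain ⟨j, hj, -⟩ := ciInf_attained (fun j => ‖x j - y‖ ^ 2 - Function.update φ k t j)
    have h1 : F s y ≤ ‖x j - y‖ ^ 2 - Function.update φ k s j :=
      ciInf_le (Set.finite_range _).bddBelow j
    have h2 : Function.update φ k t j ≤ Function.update φ k s j + |s - t| := by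
      rcases eq_or_ne j k with rfl | hjk
      · simp only [Function.update_self]
        have : t - s ≤ |s - t| := by rw [abs_sub_comm]; exact le_abs_self _
        linarith
      · rw [Function.update_of_ne hjk, Function.update_of_ne hjk]
        have : (0:ℝ) ≤ |s - t| := abs_nonneg _
        linarith
    have h3 : F t y = ‖x j - y‖ ^ 2 - Function.update φ k t j := hj
    linarith
  have hlip : ∀ y : Rd d, LipschitzWith 1 (fun t => F t y) := by
    intro y
    refine LipschitzWith.of_dist_le_mul fun s t => ?_
    rw [Real.dist_eq, Real.dist_eq, NNReal.coe_one, one_mul, abs_sub_le_iff]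
    constructor
    · have := hkey y s t; linarith
    · have := hkey y t s; rw [abs_sub_comm] at this; linarith
  -- a.e. no ties
  have h0 : ∀ j, j ≠ k → μ {y : Rd d | ‖x k - y‖ ^ 2 - φ k = ‖x j - y‖ ^ 2 - φ j} = 0 := by
    intro j hj
    apply hac
    have hv : (2:ℝ) • (x j - x k) ≠ 0 :=
      smul_ne_zero two_ne_zero (sub_ne_zero.2 fun h => hj (hx h))
    refine measure_mono_null ?_
      (volume_hyperplane ((2:ℝ) • (x j - x k)) hv (‖x j‖ ^ 2 - ‖x k‖ ^ 2 + φ k - φ j))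
    intro y hy
    simp only [Set.mem_setOf_eq] at hy ⊢
    rw [real_inner_smul_left, inner_sub_left]
    have e1 := norm_sub_sq_real (x k) y
    have e2 := norm_sub_sq_real (x j) y
    linarith
  have hae : ∀ᵐ y ∂μ, ∀ j, j ≠ k → ‖x k - y‖ ^ 2 - φ k ≠ ‖x j - y‖ ^ 2 - φ j := by
    rw [ae_all_iff]
    intro j
    rcases eq_or_ne j k with rfl | hjk
    · exact ae_of_all _ fun y h => absurd rfl h
    · have h1 : ∀ᵐ y ∂μ, ‖x k - y‖ ^ 2 - φ k ≠ ‖x j - y‖ ^ 2 - φ j := by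
        rw [ae_iff]
        simpa only [ne_eq, not_not] using h0 j hjk
      exact h1.mono fun y hy _ => hy
  -- pointwise differentiability a.e.
  have h_diff : ∀ᵐ y ∂μ, HasDerivAt (fun t => F t y) (F' y) t₀ := by
    filter_upwards [hae] with y hy
    by_cases hyL : y ∈ L
    · have hstrict : ∀ j, j ≠ k → ‖x k - y‖ ^ 2 - φ k < ‖x j - y‖ ^ 2 - φ j := by
        intro j hj
        have hle : ‖y - x k‖ ^ 2 - φ k ≤ ‖y - x j‖ ^ 2 - φ j := hyL j
        rw [norm_sub_rev y (x k), norm_sub_rev y (x j)] at hle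
        exact lt_of_le_of_ne hle (hy j hj)
      have hev : ∀ᶠ t in 𝓝 t₀, F t y = ‖x k - y‖ ^ 2 - t := by
        have hall : ∀ᶠ t in 𝓝 t₀, ∀ j,
            ‖x k - y‖ ^ 2 - t ≤ ‖x j - y‖ ^ 2 - Function.update φ k t j := by
          rw [Filter.eventually_all]
          intro j
          rcases eq_or_ne j k with rfl | hjk
          · exact Filter.Eventually.of_forall fun t => by simp
          · have hc : ContinuousAt (fun t : ℝ => ‖x k - y‖ ^ 2 - t) t₀ :=
              (continuous_const.sub continuous_id).continuousAt
            have hlt : (fun t : ℝ => ‖x k - y‖ ^ 2 - t) t₀ <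
                (fun _ : ℝ => ‖x j - y‖ ^ 2 - φ j) t₀ := hstrict j hjk
            filter_upwards [hc.eventually_lt continuousAt_const hlt] with t ht
            rw [Function.update_of_ne hjk]
            exact ht.le
        filter_upwards [hall] with t ht
        refine le_antisymm ?_ (le_ciInf ht)
        have h4 := ciInf_le
          (Set.finite_range fun j => ‖x j - y‖ ^ 2 - Function.update φ k t j).bddBelow k
        simpa using h4
      have hd : HasDerivAt (fun t : ℝ => ‖x k - y‖ ^ 2 - t) (-1) t₀ := by
        simpa using (hasDerivAt_id t₀).const_sub (‖x k - y‖ ^ 2)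
      have hFy : F' y = -1 := Set.indicator_of_mem hyL _
      rw [hFy]
      exact hd.congr_of_eventuallyEq hev
    · have hyL' : ∃ j, ‖x j - y‖ ^ 2 - φ j < ‖x k - y‖ ^ 2 - φ k := by
        by_contra h
        push_neg at h
        refine hyL fun j => ?_
        have := h j
        rw [norm_sub_rev y (x k), norm_sub_rev y (x j)]
        linarith
      obtain ⟨j₀, hj₀⟩ := hyL'
      obtain ⟨j₁, hj₁, hmin⟩ := ciInf_attained (fun j => ‖x j - y‖ ^ 2 - φ j)
      set M := ⨅ j, (‖x j - y‖ ^ 2 - φ j) with hM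
      have hMk : M < ‖x k - y‖ ^ 2 - φ k := lt_of_le_of_lt (hj₁ ▸ hmin j₀) hj₀
      have hj₁k : j₁ ≠ k := by
        intro h
        rw [hj₁, h] at hMk
        exact lt_irrefl _ hMk
      have hev : ∀ᶠ t in 𝓝 t₀, F t y = M := by
        have hc : ContinuousAt (fun t : ℝ => ‖x k - y‖ ^ 2 - t) t₀ :=
          (continuous_const.sub continuous_id).continuousAt
        have hlt : (fun _ : ℝ => M) t₀ < (fun t : ℝ => ‖x k - y‖ ^ 2 - t) t₀ := hMk
        filter_upwards [continuousAt_const.eventually_lt hc hlt] with t ht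
        refine le_antisymm ?_ (le_ciInf fun j => ?_)
        · have h4 := ciInf_le
            (Set.finite_range fun j => ‖x j - y‖ ^ 2 - Function.update φ k t j).bddBelow j₁
          rw [Function.update_of_ne hj₁k] at h4
          exact h4.trans_eq hj₁.symm
        · rcases eq_or_ne j k with rfl | hjk
          · simpa using ht.le
          · rw [Function.update_of_ne hjk]
            exact hj₁ ▸ hmin j
      have hFy : F' y = 0 := Set.indicator_of_notMem hyL _
      rw [hFy]
      exact (hasDerivAt_const t₀ M).congr_of_eventuallyEq hev
  -- assemble
  have hnn1 : Real.nnabs (1:ℝ) = 1 := by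
    ext
    simp
  have hlipae : ∀ᵐ y ∂μ, LipschitzOnWith (Real.nnabs ((fun _ : Rd d => (1:ℝ)) y))
      (fun t => F t y) (Metric.ball t₀ 1) :=
    ae_of_all _ fun y => hnn1 ▸ (hlip y).lipschitzOnWith
  have hF'meas : AEStronglyMeasurable F' μ :=
    (measurable_const.indicator hLmeas).aestronglyMeasurable
  have key := hasDerivAt_integral_of_dominated_loc_of_lip (μ := μ) (F := F) (F' := F')
    (bound := fun _ : Rd d => (1:ℝ)) (Metric.ball_mem_nhds t₀ one_pos)
    (Filter.Eventually.of_forall fun t => (hFc t).aestronglyMeasurable) hF_int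
    hF'meas hlipae (integrable_const 1) h_diff
  have hint : ∫ y, F' y ∂μ = -(μ L).toReal := by
    rw [hF'def, integral_indicator_const (-1 : ℝ) hLmeas, smul_eq_mul, mul_neg_one, measureReal_def]
  have hfinal := key.2
  rw [hint] at hfinal
  exact hfinal
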